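/- For each integer n ≥ 2, let μ_n be the measure on ℝ with density p_n(x) = (1/(2π)) · √(4n² − 4n − n²x²)/(n − x²) for |x| < 2√(1 − 1/n) and 0 elsewhere. Then each μ_n is a probability measure, and μ_n converges weakly to the semicircle law as n → ∞ (i.e., ∫ f dμ_n → ∫ f dμ_sc for every bounded continuous f : ℝ → ℝ). -/

import Mathlib

open MeasureTheory Filter Topology
open scoped ENNReal

noncomputable section

/-- The semicircle law: density `x ↦ (1/(2π))√(4−x²)` on `[−2,2]`, `0` elsewhere. -/
def semicircleLaw : Measure ℝ :=
  volume.withDensity fun x => ENNReal.ofReal (Real.sqrt (4 - x ^ 2) / (2 * Real.pi))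

namespace BFCLT

open Set Real

/-- half-width of support -/
def aa (N : ℝ) : ℝ := 2 * Real.sqrt (1 - 1/N)

/-- antiderivative -/
def F (N : ℝ) (x : ℝ) : ℝ :=
  N * Real.arcsin (x / aa N)
    - (N - 2) * Real.arcsin ((N - 2) * x / (Real.sqrt (4*N - 4) * Real.sqrt (N - x^2)))

variable {N : ℝ}

lemma hN0 (hN : 2 ≤ N) : (0:ℝ) < N := by linarith

lemma hsub (hN : 2 ≤ N) : (0:ℝ) < 1 - 1/N := by
  have h := hN0 hN
  have : 1/N ≤ 1/2 := by
    rw [div_le_div_iff₀ h (by norm_num)]; linarith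
  linarith

lemma aa_pos (hN : 2 ≤ N) : 0 < aa N := by
  have := hsub hN
  have := Real.sqrt_pos.mpr this
  unfold aa; linarith

lemma aa_sq (hN : 2 ≤ N) : (aa N)^2 = 4 - 4/N := by
  have h := hsub hN
  unfold aa
  rw [mul_pow, Real.sq_sqrt h.le]
  ring

lemma aa_sq_le (hN : 2 ≤ N) : (aa N)^2 ≤ N := by
  have h := hN0 hN
  rw [aa_sq hN]
  rw [sub_le_iff_le_add, ← sub_le_iff_le_add']
  rw [le_div_iff₀ h]
  nlinarith [sq_nonneg (N-2)]

lemma aa_lt_two (hN : 2 ≤ N) : aa N < 2 := by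
  have h := hsub hN
  have h2 : Real.sqrt (1 - 1/N) < 1 := by
    have := hN0 hN
    have h3 : 0 < 1/N := by positivity
    have : Real.sqrt (1 - 1/N) < Real.sqrt 1 := Real.sqrt_lt_sqrt h.le (by linarith)
    simpa using this
  unfold aa; linarith


lemma Q_eq (hN : 2 ≤ N) (x : ℝ) : 4*N^2 - 4*N - N^2*x^2 = N^2 * ((aa N)^2 - x^2) := by
  have h := hN0 hN
  rw [aa_sq hN]
  field_simp

lemma hasDerivAt_F (hN : 2 ≤ N) {x : ℝ} (hx : x ∈ Ioo (-(aa N)) (aa N)) :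
    HasDerivAt (F N) (Real.sqrt (4*N^2 - 4*N - N^2*x^2) / (N - x^2)) x := by
  have hNpos := hN0 hN
  set a := aa N with ha_def
  have hapos := aa_pos hN
  have hane : a ≠ 0 := hapos.ne'
  have hxa2 : x^2 < a^2 := sq_lt_sq' hx.1 hx.2
  have hNx : 0 < N - x^2 := by have := aa_sq_le hN; linarith
  have hQpos : 0 < 4*N^2 - 4*N - N^2*x^2 := by
    rw [Q_eq hN]
    have : 0 < a^2 - x^2 := by linarith
    positivity
  have hspos : (0:ℝ) < Real.sqrt (4*N - 4) := Real.sqrt_pos.mpr (by linarith)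
  set s := Real.sqrt (4*N - 4) with hs_def
  have hs2 : s^2 = 4*N - 4 := Real.sq_sqrt (by linarith)
  set sN := Real.sqrt (N - x^2) with hsN_def
  have hsNpos : 0 < sN := Real.sqrt_pos.mpr hNx
  have hsN2 : sN^2 = N - x^2 := Real.sq_sqrt hNx.le
  set sA := Real.sqrt (a^2 - x^2) with hsA_def
  have hsApos : 0 < sA := Real.sqrt_pos.mpr (by linarith)
  have hsA2 : sA^2 = a^2 - x^2 := Real.sq_sqrt (by linarith)
  set sQ := Real.sqrt (4*N^2 - 4*N - N^2*x^2) with hsQ_def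
  have hsQpos : 0 < sQ := Real.sqrt_pos.mpr hQpos
  have hsQ2 : sQ^2 = 4*N^2 - 4*N - N^2*x^2 := Real.sq_sqrt hQpos.le
  have hsQ_eq : sQ = N * sA := by
    rw [hsQ_def, hsA_def, Q_eq hN, Real.sqrt_mul (sq_nonneg N), Real.sqrt_sq hNpos.le]
  have hNa : N * a^2 = 4*N - 4 := by
    rw [aa_sq hN]; field_simp
  -- first term
  have hxa_lt : |x / a| < 1 := by
    rw [abs_div, abs_of_pos hapos, div_lt_one hapos]
    exact abs_lt.mpr ⟨hx.1, hx.2⟩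
  have h1 : HasDerivAt (fun y : ℝ => N * Real.arcsin (y / a)) (N / sA) x := by
    have hu : HasDerivAt (fun y : ℝ => y / a) (1 / a) x := (hasDerivAt_id x).div_const a
    have h1x := abs_lt.mp hxa_lt
    have harc := (Real.hasDerivAt_arcsin (by intro h; rw [h] at h1x; linarith [h1x.1])
      (by intro h; rw [h] at h1x; linarith [h1x.2])).comp x hu
    have heq : Real.sqrt (1 - (x/a)^2) = sA / a := by
      rw [show 1 - (x/a)^2 = (a^2 - x^2) / a^2 by field_simp, hsA_def,
        Real.sqrt_div (by nlinarith) (a^2), Real.sqrt_sq hapos.le]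
    have := harc.const_mul N
    refine HasDerivAt.congr_deriv this (Eq.symm ?_)
    rw [heq]
    field_simp
  -- second term
  set c := N - 2 with hc_def
  have hcnn : 0 ≤ c := by linarith
  set v := fun y : ℝ => c * y / (s * Real.sqrt (N - y^2)) with hv_def
  have hvx : v x = c * x / (s * sN) := by rw [hv_def]
  have hvx2 : (v x)^2 < 1 := by
    rw [hvx, div_pow, mul_pow, mul_pow, hs2, hsN2]
    rw [div_lt_one (by nlinarith)]
    have hkey : (4*N-4)*(N - x^2) - c^2*x^2 = 4*N^2-4*N-N^2*x^2 := by
      rw [hc_def]; ring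
    linarith
  have hvx_lt : |v x| < 1 := by
    rwa [← Real.sqrt_one, ← Real.sqrt_sq_eq_abs, Real.sqrt_lt_sqrt_iff (sq_nonneg _)]
  have hw : HasDerivAt (fun y : ℝ => Real.sqrt (N - y^2)) (1 / (2 * sN) * (-(2*x^1))) x := by
    have hin : HasDerivAt (fun y : ℝ => N - y^2) (-(2*x^1)) x :=
      (hasDerivAt_pow 2 x).const_sub N
    exact (Real.hasDerivAt_sqrt hNx.ne').comp x hin
  have hv : HasDerivAt v (c * N / (s * sN^3)) x := by
    have hnum : HasDerivAt (fun y : ℝ => c * y) c x := by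
      simpa using (hasDerivAt_id x).const_mul c
    have hden : HasDerivAt (fun y : ℝ => s * Real.sqrt (N - y^2))
        (s * (1 / (2 * sN) * (-(2*x^1)))) x := hw.const_mul s
    have hvv := hnum.div hden (by positivity)
    refine HasDerivAt.congr_deriv hvv (Eq.symm ?_)
    have hNe : N = sN^2 + x^2 := by linarith
    rw [pow_one, ← hsN_def, hNe]
    field_simp
    ring
  have h2 : HasDerivAt (fun y : ℝ => c * Real.arcsin (v y))
      (c^2 * N / (sN^2 * sQ)) x := by
    have h1v := abs_lt.mp hvx_lt
    have harc := (Real.hasDerivAt_arcsin (by intro h; rw [h] at h1v; linarith [h1v.1])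
      (by intro h; rw [h] at h1v; linarith [h1v.2])).comp x hv
    have heq : Real.sqrt (1 - (v x)^2) = sQ / (s * sN) := by
      have hden : ((4*N-4) * (N - x^2)) ≠ 0 := (mul_pos (by linarith) hNx).ne'
      have e2 : 1 - (v x)^2 = (4*N^2 - 4*N - N^2*x^2) / ((4*N-4) * (N - x^2)) := by
        rw [hvx, div_pow, mul_pow, mul_pow, hs2, hsN2]
        rw [eq_div_iff hden, sub_mul, one_mul, div_mul_cancel₀ _ hden, hc_def]
        ring
      rw [e2, Real.sqrt_div hQpos.le, ← hsQ_def,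
        Real.sqrt_mul (by linarith : (0:ℝ) ≤ 4*N-4), ← hs_def, ← hsN_def]
    have := harc.const_mul c
    refine HasDerivAt.congr_deriv this (Eq.symm ?_)
    rw [heq, one_div_div]
    have hne1 : sN ≠ 0 := hsNpos.ne'
    have hne2 : s ≠ 0 := hspos.ne'
    have hne3 : sQ ≠ 0 := hsQpos.ne'
    field_simp
  -- combine
  have hFeq : F N = fun y : ℝ => N * Real.arcsin (y / a) - c * Real.arcsin (v y) := rfl
  have hF : HasDerivAt (F N) (N / sA - c^2 * N / (sN^2 * sQ)) x := by
    rw [hFeq]; exact h1.sub h2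
  have hfinal : N / sA - c^2 * N / (sN^2 * sQ) = sQ / (N - x^2) := by
    rw [hsQ_eq, hsN2, hc_def]
    rw [div_sub_div _ _ hsApos.ne' (by positivity),
      div_eq_div_iff (by positivity) hNx.ne']
    linear_combination (-(N*sA*(N - x^2)*N)) * hsA2 + (-(N*sA*(N - x^2))) * hNa
  rwa [hfinal] at hF


lemma aa_sq_lt (hN : 2 < N) : (aa N)^2 < N := by
  have h : (0:ℝ) < N := by linarith
  rw [aa_sq (le_of_lt hN), sub_lt_iff_lt_add, ← sub_lt_iff_lt_add', lt_div_iff₀ h]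
  nlinarith

lemma continuousOn_F (hN : 2 ≤ N) : ContinuousOn (F N) (Icc (-(aa N)) (aa N)) := by
  rcases eq_or_lt_of_le hN with hEq | hlt
  · have hFeq : F N = fun x : ℝ => N * Real.arcsin (x / aa N) := by
      funext x
      rw [F, ← hEq]
      norm_num
    rw [hFeq]
    exact (continuous_const.mul
      (Real.continuous_arcsin.comp (continuous_id.div_const _))).continuousOn
  · apply ContinuousOn.sub
    · exact (continuous_const.mul
        (Real.continuous_arcsin.comp (continuous_id.div_const _))).continuousOn
    · apply ContinuousOn.mul continuousOn_const
      apply Real.continuous_arcsin.comp_continuousOn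
      apply ContinuousOn.div
      · exact (continuous_const.mul continuous_id).continuousOn
      · exact (continuous_const.mul
          ((continuous_const.sub (continuous_pow 2)).sqrt)).continuousOn
      · intro x hx
        have hx2 : x^2 ≤ (aa N)^2 := sq_le_sq' hx.1 hx.2
        have hlt2 := aa_sq_lt hlt
        have h1 : 0 < N - x^2 := by linarith
        have h2 : 0 < Real.sqrt (4*N - 4) := Real.sqrt_pos.mpr (by linarith)
        have h3 : 0 < Real.sqrt (N - x^2) := Real.sqrt_pos.mpr h1
        positivity

lemma F_neg (N x : ℝ) : F N (-x) = - F N x := by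
  simp only [F, neg_sq, neg_div, mul_neg, Real.arcsin_neg]
  ring

lemma F_aa (hN : 2 ≤ N) : F N (aa N) = Real.pi := by
  have hNpos := hN0 hN
  have hapos := aa_pos hN
  rw [F, div_self hapos.ne', Real.arcsin_one]
  rcases eq_or_lt_of_le hN with hEq | hlt
  · rw [← hEq]
    norm_num
    ring
  · have h1 : N - (aa N)^2 = (N-2)^2/N := by
      rw [aa_sq hN]
      field_simp
      ring
    have h2 : Real.sqrt (N - (aa N)^2) = (N-2)/Real.sqrt N := by
      rw [h1, Real.sqrt_div (sq_nonneg _), Real.sqrt_sq (by linarith)]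
    have h3 : Real.sqrt (4*N - 4) = 2 * Real.sqrt (N - 1) := by
      rw [show 4*N - 4 = 4*(N-1) by ring, Real.sqrt_mul (by norm_num),
        show Real.sqrt 4 = 2 by rw [show (4:ℝ) = 2^2 by norm_num, Real.sqrt_sq]; norm_num]
    have h4 : aa N = 2 * Real.sqrt (N-1) / Real.sqrt N := by
      rw [aa, show 1 - 1/N = (N-1)/N by field_simp, Real.sqrt_div (by linarith) N]
      ring
    have hsN : 0 < Real.sqrt N := Real.sqrt_pos.mpr hNpos
    have hsN1 : 0 < Real.sqrt (N-1) := Real.sqrt_pos.mpr (by linarith)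
    have harg : (N - 2) * aa N / (Real.sqrt (4*N - 4) * Real.sqrt (N - (aa N)^2)) = 1 := by
      rw [h2, h3, h4]
      have hN2 : (0:ℝ) < N - 2 := by linarith
      rw [div_eq_one_iff_eq (ne_of_gt (mul_pos (by positivity) (div_pos hN2 hsN)))]
      field_simp
    rw [harg, Real.arcsin_one]
    ring

lemma integrableOn_g (hN : 2 ≤ N) :
    IntegrableOn (fun x => Real.sqrt (4*N^2 - 4*N - N^2*x^2) / (N - x^2))
      (Ioo (-(aa N)) (aa N)) volume := by
  have hnn : ∀ x ∈ Ioo (-(aa N)) (aa N),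
      0 ≤ Real.sqrt (4*N^2 - 4*N - N^2*x^2) / (N - x^2) := by
    intro x hx
    have hx2 : x^2 < (aa N)^2 := sq_lt_sq' hx.1 hx.2
    have := aa_sq_le hN
    exact div_nonneg (Real.sqrt_nonneg _) (by linarith)
  exact (intervalIntegral.integrableOn_deriv_of_nonneg (continuousOn_F hN)
    (fun x hx => hasDerivAt_F hN hx) hnn).mono_set Ioo_subset_Ioc_self

lemma integral_g (hN : 2 ≤ N) :
    ∫ x in Ioo (-(aa N)) (aa N), Real.sqrt (4*N^2 - 4*N - N^2*x^2) / (N - x^2) = 2 * Real.pi := by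
  have hapos := aa_pos hN
  have hab : -(aa N) ≤ aa N := by linarith
  have hnn : ∀ x ∈ Ioo (-(aa N)) (aa N),
      0 ≤ Real.sqrt (4*N^2 - 4*N - N^2*x^2) / (N - x^2) := by
    intro x hx
    have hx2 : x^2 < (aa N)^2 := sq_lt_sq' hx.1 hx.2
    have := aa_sq_le hN
    exact div_nonneg (Real.sqrt_nonneg _) (by linarith)
  have hIoc : IntegrableOn (fun x => Real.sqrt (4*N^2 - 4*N - N^2*x^2) / (N - x^2))
      (Ioc (-(aa N)) (aa N)) volume :=
    intervalIntegral.integrableOn_deriv_of_nonneg (continuousOn_F hN)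
      (fun x hx => hasDerivAt_F hN hx) hnn
  have hint : IntervalIntegrable (fun x => Real.sqrt (4*N^2 - 4*N - N^2*x^2) / (N - x^2))
      volume (-(aa N)) (aa N) :=
    (intervalIntegrable_iff_integrableOn_Ioc_of_le hab).mpr hIoc
  have hFTC := intervalIntegral.integral_eq_sub_of_hasDeriv_right_of_le hab (continuousOn_F hN)
    (fun x hx => (hasDerivAt_F hN hx).hasDerivWithinAt) hint
  rw [intervalIntegral.integral_of_le hab] at hFTC
  rw [← MeasureTheory.integral_Ioc_eq_integral_Ioo, hFTC, F_aa hN, F_neg, F_aa hN]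
  ring


/-- the density of `μ n` -/
def dens (N : ℝ) (x : ℝ) : ℝ :=
  if |x| < 2 * Real.sqrt (1 - 1/N) then
    (1 / (2 * Real.pi)) * Real.sqrt (4*N^2 - 4*N - N^2*x^2) / (N - x^2)
  else 0

lemma dens_nonneg (hN : 0 ≤ N) (x : ℝ) : 0 ≤ dens N x := by
  rw [dens]
  split_ifs with h
  · rcases le_or_gt 0 (N - x^2) with h1 | h1
    · positivity
    · have hQ : 4*N^2 - 4*N - N^2*x^2 ≤ 0 := by nlinarith [sq_nonneg (N-2), sq_nonneg x]
      rw [Real.sqrt_eq_zero_of_nonpos hQ]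
      simp
  · exact le_refl _

lemma dens_measurable (N : ℝ) : Measurable (dens N) := by
  unfold dens
  apply Measurable.ite
  · exact measurableSet_lt (continuous_abs.measurable) measurable_const
  · apply Measurable.div
    · exact (continuous_const.mul
        ((continuous_const.sub (continuous_const.mul (continuous_pow 2))).sqrt)).measurable
    · exact (continuous_const.sub (continuous_pow 2)).measurable
  · exact measurable_const

lemma dens_eq_indicator (N : ℝ) (x : ℝ) :
    dens N x = Set.indicator (Ioo (-(aa N)) (aa N))
      (fun x => (1 / (2 * Real.pi)) * Real.sqrt (4*N^2 - 4*N - N^2*x^2) / (N - x^2)) x := by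
  rw [dens, Set.indicator_apply]
  exact if_congr (by rw [mem_Ioo, ← abs_lt]; exact Iff.rfl) rfl rfl

lemma integrableOn_p (hN : 2 ≤ N) :
    IntegrableOn (fun x => (1 / (2 * Real.pi)) * Real.sqrt (4*N^2 - 4*N - N^2*x^2) / (N - x^2))
      (Ioo (-(aa N)) (aa N)) volume := by
  have h := (integrableOn_g hN).const_mul (1 / (2 * Real.pi))
  simp only [mul_div_assoc]; exact h

lemma lintegral_dens (hN : 2 ≤ N) :
    ∫⁻ x, ENNReal.ofReal (dens N x) = 1 := by
  have hτ : (0:ℝ) < 2 * Real.pi := by positivity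
  calc ∫⁻ x, ENNReal.ofReal (dens N x)
      = ∫⁻ x, Set.indicator (Ioo (-(aa N)) (aa N))
          (fun x => ENNReal.ofReal
            ((1 / (2 * Real.pi)) * Real.sqrt (4*N^2 - 4*N - N^2*x^2) / (N - x^2))) x := by
        apply lintegral_congr
        intro x
        rw [dens_eq_indicator N x, Set.indicator_apply, Set.indicator_apply]
        split_ifs <;> simp
    _ = ∫⁻ x in Ioo (-(aa N)) (aa N), ENNReal.ofReal
          ((1 / (2 * Real.pi)) * Real.sqrt (4*N^2 - 4*N - N^2*x^2) / (N - x^2)) :=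
        lintegral_indicator measurableSet_Ioo _
    _ = ENNReal.ofReal (∫ x in Ioo (-(aa N)) (aa N),
          (1 / (2 * Real.pi)) * Real.sqrt (4*N^2 - 4*N - N^2*x^2) / (N - x^2)) := by
        rw [MeasureTheory.ofReal_integral_eq_lintegral_ofReal (integrableOn_p hN)]
        apply Filter.Eventually.of_forall
        intro x
        simp only [Pi.zero_apply]
        have h := dens_nonneg (by linarith : (0:ℝ) ≤ N) x
        rcases le_or_gt 0 (N - x^2) with h1 | h1
        · positivity
        · have hQ : 4*N^2 - 4*N - N^2*x^2 ≤ 0 := by nlinarith [sq_nonneg (N-2), sq_nonneg x]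
          rw [Real.sqrt_eq_zero_of_nonpos hQ]
          simp
    _ = ENNReal.ofReal ((1 / (2 * Real.pi)) * (2 * Real.pi)) := by
        congr 1
        simp only [mul_div_assoc]
        rw [MeasureTheory.integral_const_mul, integral_g hN]
    _ = 1 := by
        rw [one_div_mul_cancel hτ.ne']
        simp


/-- semicircle density -/
def scd (x : ℝ) : ℝ := Real.sqrt (4 - x^2) / (2 * Real.pi)

lemma scd_nonneg (x : ℝ) : 0 ≤ scd x := by
  rw [scd]; positivity

lemma scd_measurable : Measurable scd :=
  ((continuous_const.sub (continuous_pow 2)).sqrt.div_const _).measurable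

lemma integral_withDensity_ofReal {d : ℝ → ℝ} (hd : Measurable d) (hnn : ∀ x, 0 ≤ d x)
    (f : ℝ → ℝ) :
    ∫ x, f x ∂(volume.withDensity fun x => ENNReal.ofReal (d x)) = ∫ x, d x * f x := by
  have h1 : (fun x => ENNReal.ofReal (d x)) = (fun x => ((fun y => (d y).toNNReal) x : ℝ≥0∞)) :=
    rfl
  rw [h1, integral_withDensity_eq_integral_smul hd.real_toNNReal f]
  congr 1
  funext x
  rw [NNReal.smul_def, Real.coe_toNNReal _ (hnn x), smul_eq_mul]

lemma dens_le (hN : 6 ≤ N) (x : ℝ) : dens N x ≤ 3 / (2 * Real.pi) * Real.sqrt (4 - x^2) := by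
  have hN2 : (2:ℝ) ≤ N := by linarith
  have hπ : (0:ℝ) < 2 * Real.pi := by positivity
  rw [dens]
  split_ifs with h
  · have hx2 : x^2 < (aa N)^2 := by
      have := abs_lt.mp h
      exact sq_lt_sq' this.1 this.2
    have ha4 : (aa N)^2 ≤ 4 := by
      rw [aa_sq hN2]
      have : 0 < 4/N := by positivity
      linarith
    have hNx : 0 < N - x^2 := by linarith [aa_sq_le hN2]
    have hQle : Real.sqrt (4*N^2 - 4*N - N^2*x^2) ≤ N * Real.sqrt (4 - x^2) := by
      rw [Q_eq hN2, Real.sqrt_mul (sq_nonneg N), Real.sqrt_sq (by linarith : (0:ℝ) ≤ N)]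
      exact mul_le_mul_of_nonneg_left (Real.sqrt_le_sqrt (by linarith)) (by linarith)
    have ht : 0 ≤ Real.sqrt (4 - x^2) := Real.sqrt_nonneg _
    rw [div_le_iff₀ hNx]
    have hkey : N * Real.sqrt (4 - x^2) ≤ 3 * Real.sqrt (4 - x^2) * (N - x^2) := by
      nlinarith
    calc 1 / (2 * Real.pi) * Real.sqrt (4*N^2 - 4*N - N^2*x^2)
        ≤ 1 / (2 * Real.pi) * (N * Real.sqrt (4 - x^2)) := by
          apply mul_le_mul_of_nonneg_left hQle (by positivity)
      _ ≤ 1 / (2 * Real.pi) * (3 * Real.sqrt (4 - x^2) * (N - x^2)) := by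
          apply mul_le_mul_of_nonneg_left hkey (by positivity)
      _ = 3 / (2 * Real.pi) * Real.sqrt (4 - x^2) * (N - x^2) := by ring
  · positivity

lemma aa_tendsto : Tendsto (fun n : ℕ => aa (n:ℝ)) atTop (𝓝 2) := by
  have h1 : Tendsto (fun n : ℕ => 1 - 1/(n:ℝ)) atTop (𝓝 1) := by
    have := tendsto_one_div_atTop_nhds_zero_nat (𝕜 := ℝ)
    have := this.const_sub 1
    simpa using this
  have h2 : Tendsto (fun n : ℕ => Real.sqrt (1 - 1/(n:ℝ))) atTop (𝓝 1) := by
    have := (Real.continuous_sqrt.tendsto 1).comp h1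
    rwa [Real.sqrt_one] at this
  have := h2.const_mul 2
  simpa [aa] using this

lemma aa_le_two' (n : ℕ) : aa (n:ℝ) ≤ 2 := by
  rw [aa]
  have h : Real.sqrt (1 - 1/(n:ℝ)) ≤ 1 := by
    apply Real.sqrt_le_one.mpr
    have : 0 ≤ 1/(n:ℝ) := by positivity
    linarith
  linarith

lemma dens_tendsto (x : ℝ) : Tendsto (fun n : ℕ => dens (n:ℝ) x) atTop (𝓝 (scd x)) := by
  rcases lt_or_ge |x| 2 with hx | hx
  · -- |x| < 2
    have hev : ∀ᶠ n : ℕ in atTop, |x| < aa (n:ℝ) := aa_tendsto.eventually (lt_mem_nhds hx)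
    have hev2 : ∀ᶠ n : ℕ in atTop, (2:ℝ) ≤ (n:ℝ) := by
      filter_upwards [eventually_ge_atTop 2] with n hn
      exact_mod_cast hn
    -- the eventual form
    have heq : ∀ᶠ n : ℕ in atTop, dens (n:ℝ) x
        = 1 / (2 * Real.pi) * (Real.sqrt (4 - 4/(n:ℝ) - x^2) * ((n:ℝ) / ((n:ℝ) - x^2))) := by
      filter_upwards [hev, hev2] with n hn hn2
      rw [dens, if_pos (by simpa [aa] using hn), Q_eq hn2,
        Real.sqrt_mul (sq_nonneg _), Real.sqrt_sq (by linarith : (0:ℝ) ≤ (n:ℝ)), aa_sq hn2]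
      ring
    have h4 : Tendsto (fun n : ℕ => 4/(n:ℝ)) atTop (𝓝 0) := by
      have := tendsto_one_div_atTop_nhds_zero_nat.const_mul (4:ℝ)
      simpa [div_eq_mul_inv] using this
    have t1 : Tendsto (fun n : ℕ => 4 - 4/(n:ℝ) - x^2) atTop (𝓝 (4 - x^2)) := by
      have := (h4.const_sub 4).sub_const (x^2)
      simpa using this
    have t2 : Tendsto (fun n : ℕ => Real.sqrt (4 - 4/(n:ℝ) - x^2)) atTop
        (𝓝 (Real.sqrt (4 - x^2))) := (Real.continuous_sqrt.tendsto _).comp t1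
    have hd : Tendsto (fun n : ℕ => (n:ℝ) - x^2) atTop atTop := by
      simpa [sub_eq_add_neg] using
        tendsto_atTop_add_const_right atTop (-x^2) tendsto_natCast_atTop_atTop
    have hinv : Tendsto (fun n : ℕ => x^2 / ((n:ℝ) - x^2)) atTop (𝓝 0) :=
      Tendsto.div_atTop tendsto_const_nhds hd
    have t3 : Tendsto (fun n : ℕ => (n:ℝ) / ((n:ℝ) - x^2)) atTop (𝓝 1) := by
      have hposev : ∀ᶠ n : ℕ in atTop, 0 < (n:ℝ) - x^2 := hd.eventually_gt_atTop 0
      have := hinv.const_add 1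
      rw [add_zero] at this
      apply this.congr'
      filter_upwards [hposev] with n hn
      field_simp; ring
    have tfin := (t2.mul t3).const_mul (1 / (2 * Real.pi))
    rw [mul_one] at tfin
    have : Tendsto (fun n : ℕ => dens (n:ℝ) x) atTop
        (𝓝 (1 / (2 * Real.pi) * Real.sqrt (4 - x^2))) := Tendsto.congr' (heq.mono fun n h => h.symm) tfin
    have hval : 1 / (2 * Real.pi) * Real.sqrt (4 - x^2) = scd x := by
      rw [scd]; ring
    rwa [hval] at this
  · -- |x| ≥ 2
    have hval : scd x = 0 := by
      rw [scd, Real.sqrt_eq_zero_of_nonpos, zero_div]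
      nlinarith [sq_abs x]
    have heq : ∀ n : ℕ, dens (n:ℝ) x = 0 := by
      intro n
      rw [dens, if_neg]
      push_neg
      calc 2 * Real.sqrt (1 - 1/(n:ℝ)) = aa (n:ℝ) := rfl
        _ ≤ 2 := aa_le_two' n
        _ ≤ |x| := hx
    rw [hval]
    simp only [heq]
    exact tendsto_const_nhds

lemma bound_integrable (C : ℝ) :
    Integrable (fun x : ℝ => C * Real.sqrt (4 - x^2)) volume := by
  apply Continuous.integrable_of_hasCompactSupport
  · exact continuous_const.mul (continuous_const.sub (continuous_pow 2)).sqrt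
  · apply HasCompactSupport.intro (isCompact_Icc (a := (-2:ℝ)) (b := 2))
    intro x hx
    rw [mem_Icc] at hx
    push_neg at hx
    have h : 4 - x^2 ≤ 0 := by
      rcases lt_or_ge x (-2) with h | h
      · nlinarith
      · have := hx h
        nlinarith
    rw [Real.sqrt_eq_zero_of_nonpos h, mul_zero]

lemma tendsto_integral_dens (f : BoundedContinuousFunction ℝ ℝ) :
    Tendsto (fun n : ℕ => ∫ x, dens (n:ℝ) x * f x) atTop (𝓝 (∫ x, scd x * f x)) := by
  apply MeasureTheory.tendsto_integral_filter_of_dominated_convergence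
    (fun x => (3 / (2 * Real.pi) * ‖f‖) * Real.sqrt (4 - x^2))
  · apply Filter.Eventually.of_forall
    intro n
    exact ((dens_measurable _).mul f.continuous.measurable).aestronglyMeasurable
  · filter_upwards [eventually_ge_atTop 6] with n hn
    apply Filter.Eventually.of_forall
    intro x
    have hn6 : (6:ℝ) ≤ (n:ℝ) := by exact_mod_cast hn
    have h1 : ‖dens (n:ℝ) x * f x‖ = dens (n:ℝ) x * ‖f x‖ := by
      rw [norm_mul, Real.norm_eq_abs (dens _ _),
        abs_of_nonneg (dens_nonneg (by linarith) x)]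
    rw [h1]
    calc dens (n:ℝ) x * ‖f x‖
        ≤ (3 / (2 * Real.pi) * Real.sqrt (4 - x^2)) * ‖f‖ := by
          apply mul_le_mul (dens_le hn6 x) (f.norm_coe_le_norm x) (norm_nonneg _)
          positivity
      _ = (3 / (2 * Real.pi) * ‖f‖) * Real.sqrt (4 - x^2) := by ring
  · exact bound_integrable _
  · apply Filter.Eventually.of_forall
    intro x
    exact (dens_tendsto x).mul_const (f x)

end BFCLT

/-- **Free central limit theorem, binary case.** For `n ≥ 2` let `μ_n` be the measure with
density `p_n(x) = (1/(2π))·√(4n²−4n−n²x²)/(n−x²)` for `|x| < 2√(1−1/n)` and `0` elsewhere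
(the distribution of the normalized free additive convolution of `n` symmetric binary
measures).  Then each `μ_n` is a probability measure and `μ_n` converges weakly to the
semicircle law as `n → ∞`. -/
theorem binary_free_clt
    (μ : ℕ → Measure ℝ)
    (hμ : ∀ n : ℕ, μ n = volume.withDensity fun x =>
      ENNReal.ofReal
        (if |x| < 2 * Real.sqrt (1 - 1 / (n : ℝ)) then
          (1 / (2 * Real.pi)) * Real.sqrt (4 * (n : ℝ) ^ 2 - 4 * n - n ^ 2 * x ^ 2)
            / ((n : ℝ) - x ^ 2)
        else 0)) :
    (∀ n : ℕ, 2 ≤ n → IsProbabilityMeasure (μ n)) ∧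
    (∀ f : BoundedContinuousFunction ℝ ℝ,
      Tendsto (fun n => ∫ x, f x ∂(μ n)) atTop (𝓝 (∫ x, f x ∂semicircleLaw))) := by
  have hdens : ∀ n : ℕ, (fun x : ℝ => ENNReal.ofReal
      (if |x| < 2 * Real.sqrt (1 - 1 / (n : ℝ)) then
        (1 / (2 * Real.pi)) * Real.sqrt (4 * (n : ℝ) ^ 2 - 4 * n - n ^ 2 * x ^ 2)
          / ((n : ℝ) - x ^ 2)
      else 0)) = fun x => ENNReal.ofReal (BFCLT.dens (n:ℝ) x) := fun n => rfl
  constructor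
  · intro n hn
    have hN : (2:ℝ) ≤ (n:ℝ) := by exact_mod_cast hn
    constructor
    rw [hμ n, hdens n, MeasureTheory.withDensity_apply _ MeasurableSet.univ,
      Measure.restrict_univ]
    exact BFCLT.lintegral_dens hN
  · intro f
    have h1 : ∀ n : ℕ, ∫ x, f x ∂(μ n) = ∫ x, BFCLT.dens (n:ℝ) x * f x := by
      intro n
      rw [hμ n, hdens n]
      exact BFCLT.integral_withDensity_ofReal (BFCLT.dens_measurable _)
        (BFCLT.dens_nonneg (Nat.cast_nonneg n)) f
    have h2 : ∫ x, f x ∂semicircleLaw = ∫ x, BFCLT.scd x * f x := by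
      rw [semicircleLaw, show (fun x : ℝ => ENNReal.ofReal (Real.sqrt (4 - x ^ 2) / (2 * Real.pi)))
          = fun x => ENNReal.ofReal (BFCLT.scd x) from rfl]
      exact BFCLT.integral_withDensity_ofReal BFCLT.scd_measurable BFCLT.scd_nonneg f
    simp only [h1, h2]
    exact BFCLT.tendsto_integral_dens f
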